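/- Let C be a path category, X an object of C, m a path embedding into X, and S a nonempty subset of M-Sub(X). If m is the supremum of S in M-Sub(X), then m ∈ S. -/

import Mathlib

open CategoryTheory CategoryTheory.Limits

universe v u

variable {C : Type u} [Category.{v} C]

/-- A weak factorisation system `(Q, M)` on a category `C`. -/
structure WFS (C : Type u) [Category.{v} C] where
  Q : MorphismProperty C
  M : MorphismProperty C
  fact : ∀ {X Y : C} (f : X ⟶ Y), ∃ (Z : C) (e : X ⟶ Z) (m : Z ⟶ Y), Q e ∧ M m ∧ e ≫ m = f
  Q_iff : ∀ {X Y : C} (f : X ⟶ Y), Q f ↔ ∀ ⦃A B : C⦄ (g : A ⟶ B), M g → HasLiftingProperty f g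
  M_iff : ∀ {X Y : C} (g : X ⟶ Y), M g ↔ ∀ ⦃A B : C⦄ (f : A ⟶ B), Q f → HasLiftingProperty f g

/-- A proper factorisation system: a weak factorisation system in which every `Q`-morphism is an
epimorphism and every `M`-morphism is a monomorphism. -/
structure ProperWFS (C : Type u) [Category.{v} C] extends WFS C where
  q_epi : ∀ {X Y : C} (f : X ⟶ Y), Q f → Epi f
  m_mono : ∀ {X Y : C} (f : X ⟶ Y), M f → Mono f


/-- A stable proper factorisation system: additionally, the pullback of a quotient (`Q`-morphism)
along an embedding (`M`-morphism) exists and is again a quotient. -/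
structure StableWFS (C : Type u) [Category.{v} C] extends ProperWFS C where
  stable : ∀ {X Z W : C} (e : X ⟶ W) (m : Z ⟶ W), Q e → M m →
    ∃ (P : C) (p₁ : P ⟶ X) (p₂ : P ⟶ Z), IsPullback p₁ p₂ e m ∧ Q p₂

/-- The type of `M`-subobjects (representatives): embeddings into `X`. -/
abbrev MSub (M : MorphismProperty C) (X : C) : Type (max u v) :=
  Σ S : C, {m : S ⟶ X // M m}

/-- `M`-subobjects are preordered by factorisation; the poset of `M`-subobjects is the
induced partial order on the antisymmetrization. -/
instance (M : MorphismProperty C) (X : C) : Preorder (MSub M X) where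
  le a b := ∃ i : a.1 ⟶ b.1, i ≫ b.2.1 = a.2.1
  le_refl a := ⟨𝟙 a.1, Category.id_comp _⟩
  le_trans a b c h₁ h₂ := by
    obtain ⟨i, hi⟩ := h₁
    obtain ⟨j, hj⟩ := h₂
    exact ⟨i ≫ j, by rw [Category.assoc, hj, hi]⟩

/-- An object `X` is a path if its poset of `M`-subobjects is a finite chain, i.e. the preorder
of `M`-subobjects is total and has finitely many equivalence classes. -/
def IsPathOb (M : MorphismProperty C) (X : C) : Prop :=
  (∀ a b : MSub M X, a ≤ b ∨ b ≤ a) ∧ Finite (Antisymmetrization (MSub M X) (· ≤ ·))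

/-- A path category: a category with a stable proper factorisation system having all small
coproducts of paths, in which every path is connected, and satisfying the 2-out-of-3 condition
for quotients between paths. -/
structure PathCategory (C : Type u) [Category.{v} C] extends StableWFS C where
  pathCoproducts : ∀ {ι : Type v} (Ps : ι → C), (∀ i, IsPathOb M (Ps i)) →
    HasColimit (Discrete.functor Ps)
  connected : ∀ {ι : Type v} [Nonempty ι] (Ps : ι → C), (∀ i, IsPathOb M (Ps i)) →
    ∀ (c : ColimitCocone (Discrete.functor Ps)) {P : C}, IsPathOb M P →
      ∀ f : P ⟶ c.cocone.pt, ∃ (i : ι) (g : P ⟶ Ps i), g ≫ c.cocone.ι.app ⟨i⟩ = f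
  two_of_three : ∀ {P R S : C}, IsPathOb M P → IsPathOb M R → IsPathOb M S →
    ∀ (f : P ⟶ R) (g : R ⟶ S), Q (f ≫ g) → Q f

/-- In a proper WFS, `M` is closed under left cancellation. -/
lemma wfs_M_cancel (W : ProperWFS C) {A B X : C} (i : A ⟶ B) (g : B ⟶ X)
    (hg : W.M g) (hig : W.M (i ≫ g)) : W.M i := by
  rw [W.M_iff]
  intro P P' f hf
  have h1 : HasLiftingProperty f (i ≫ g) := (W.M_iff (i ≫ g)).1 hig f hf
  have hmono : Mono g := W.m_mono g hg
  constructor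
  intro u v sq
  have sq' : CommSq u f (i ≫ g) (v ≫ g) :=
    ⟨by rw [← Category.assoc, sq.w, Category.assoc]⟩
  refine ⟨⟨⟨sq'.lift, sq'.fac_left, ?_⟩⟩⟩
  have h := sq'.fac_right
  rw [← Category.assoc] at h
  exact (cancel_mono g).1 h

/-- In a path category, if a path embedding `m` into `X` is the supremum in `M-Sub(X)` of a
nonempty set `S` of `M`-subobjects, then `m` belongs to `S` (up to equivalence of subobjects). -/
theorem stmt14 (pc : PathCategory C) {X : C} (m : MSub pc.M X) (hm : IsPathOb pc.M m.1)
    (S : Set (MSub pc.M X)) (hS : S.Nonempty)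
    (hub : ∀ s ∈ S, s ≤ m) (hlub : ∀ b : MSub pc.M X, (∀ s ∈ S, s ≤ b) → m ≤ b) :
    ∃ s ∈ S, s ≤ m ∧ m ≤ s := by
  classical
  -- For each `s ∈ S`, choose the factorisation through `m` and view it as an
  -- `M`-subobject of `m.1` (using left cancellation of `M`).
  have hi : ∀ s ∈ S, ∃ i : s.1 ⟶ m.1, i ≫ m.2.1 = s.2.1 := fun s hs => hub s hs
  let ι : ∀ s ∈ S, (s.1 ⟶ m.1) := fun s hs => (hi s hs).choose
  have ιspec : ∀ s (hs : s ∈ S), ι s hs ≫ m.2.1 = s.2.1 := fun s hs => (hi s hs).choose_spec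
  let sub : {s : MSub pc.M X // s ∈ S} → MSub pc.M m.1 := fun p =>
    ⟨p.1.1, ι p.1 p.2, wfs_M_cancel pc.toProperWFS _ m.2.1 m.2.2
      (by rw [ιspec p.1 p.2]; exact p.1.2.2)⟩
  -- the set of images in the antisymmetrization of `M-Sub(m.1)`
  haveI : Finite (Antisymmetrization (MSub pc.M m.1) (· ≤ ·)) := hm.2
  set T : Set (Antisymmetrization (MSub pc.M m.1) (· ≤ ·)) :=
    Set.range (fun p => toAntisymmetrization (· ≤ ·) (sub p)) with hT
  have hTfin : T.Finite := Set.toFinite T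
  have hTne : T.Nonempty := by
    obtain ⟨s, hs⟩ := hS
    exact ⟨_, ⟨⟨s, hs⟩, rfl⟩⟩
  obtain ⟨a, haT, hamax'⟩ := Set.Finite.exists_maximal hTfin hTne
  have hamax : ∀ a' ∈ T, id a ≤ id a' → id a = id a' := fun a' ha' h => le_antisymm h (hamax' ha' h)
  obtain ⟨⟨s₀, hs₀⟩, rfl⟩ := haT
  -- `s₀` is an upper bound of `S`
  have hub₀ : ∀ s ∈ S, s ≤ s₀ := by
    intro s hs
    have hle : sub ⟨s, hs⟩ ≤ sub ⟨s₀, hs₀⟩ := by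
      rcases hm.1 (sub ⟨s, hs⟩) (sub ⟨s₀, hs₀⟩) with h | h
      · exact h
      · have := hamax (toAntisymmetrization (α := MSub pc.M m.1) (· ≤ ·) (sub ⟨s, hs⟩)) ⟨⟨s, hs⟩, rfl⟩
          (by simpa [toAntisymmetrization_le_toAntisymmetrization_iff] using h)
        have : toAntisymmetrization (α := MSub pc.M m.1) (· ≤ ·) (sub ⟨s, hs⟩) ≤
            toAntisymmetrization (α := MSub pc.M m.1) (· ≤ ·) (sub ⟨s₀, hs₀⟩) := le_of_eq this.symm
        rwa [toAntisymmetrization_le_toAntisymmetrization_iff] at this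
    obtain ⟨j, hj⟩ := hle
    refine ⟨j, ?_⟩
    have : j ≫ ι s₀ hs₀ ≫ m.2.1 = ι s hs ≫ m.2.1 := by
      rw [← Category.assoc, hj]
    rw [ιspec s₀ hs₀, ιspec s hs] at this
    exact this
  exact ⟨s₀, hs₀, hub s₀ hs₀, hlub s₀ hub₀⟩
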